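/- Vandermonde-type determinant formula for factorial Grothendieck polynomials: for a partition λ of length ≤ r, Σ_{w∈S_r} w( ∏_{i=1}^r [x_i|b]^{λ_i+r-i} / ∏_{1≤i<j≤r}(x_i⊖x_j) ) = det( [x_i|b]^{λ_j+r-j} (1+βx_i)^{j-1} )_{1≤i,j≤r} / ∏_{1≤i<j≤r}(x_i - x_j). -/

import Mathlib

open Finset


private lemma aux_prod_Ioi {K : Type*} [CommRing K] (r : ℕ) (g : Fin r → K) :
    ∏ i : Fin r, ∏ j ∈ Ioi i, g j = ∏ j : Fin r, g j ^ (j : ℕ) := by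
  rw [Finset.prod_comm' (t' := univ) (s' := fun j => Iio j) (by simp [mem_Ioi, mem_Iio, and_comm])]
  simp [Finset.prod_const, Fin.card_Iio]

private lemma aux_sign {K : Type*} [CommRing K] (r : ℕ) (v : Fin r → K) (w : Equiv.Perm (Fin r)) :
    ∏ i : Fin r, ∏ j ∈ Ioi i, (v (w i) - v (w j)) =
      (Equiv.Perm.sign w : ℤ) * ∏ i : Fin r, ∏ j ∈ Ioi i, (v i - v j) := by
  have key : ∀ u : Equiv.Perm (Fin r), ∏ i : Fin r, ∏ j ∈ Ioi i, (v (u j) - v (u i)) =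
      (Equiv.Perm.sign u : ℤ) * ∏ i : Fin r, ∏ j ∈ Ioi i, (v j - v i) := by
    intro u
    have h1 : Matrix.det (Matrix.vandermonde (v ∘ u)) =
        ∏ i : Fin r, ∏ j ∈ Ioi i, (v (u j) - v (u i)) := by
      rw [Matrix.det_vandermonde]; rfl
    have h : Matrix.vandermonde (v ∘ u) = (Matrix.vandermonde v).submatrix u id := by
      ext i j; simp [Matrix.vandermonde]
    rw [← h1, h, Matrix.det_permute, Matrix.det_vandermonde]
  have neg : ∀ (u : Fin r → K), ∏ i : Fin r, ∏ j ∈ Ioi i, (u i - u j) =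
      (∏ i : Fin r, (-1 : K) ^ (Ioi i).card) *
        ∏ i : Fin r, ∏ j ∈ Ioi i, (u j - u i) := by
    intro u
    rw [← Finset.prod_mul_distrib]
    refine Finset.prod_congr rfl fun i _ => ?_
    rw [← Finset.prod_const, ← Finset.prod_mul_distrib]
    exact Finset.prod_congr rfl fun j _ => by ring
  have n1 := neg (fun i => v (w i))
  have n2 := neg v
  beta_reduce at n1
  rw [n1, key w, n2]
  ring

/-- Vandermonde-type determinant formula for factorial Grothendieck
polynomials: for a partition `λ` of length `≤ r`,
`Σ_{w∈S_r} w(∏_i [x_i|b]^{λ_i+r-i} / ∏_{i<j}(x_i⊖x_j))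
  = det([x_i|b]^{λ_j+r-j} (1+βx_i)^{j-1}) / ∏_{i<j}(x_i - x_j)`,
where `[x|b]^k = (x⊖b₁)⋯(x⊖b_k)` and `x⊖y = (x-y)/(1+βy)`.  With 0-indexed
`i, j : Fin r`, the exponent `λ_j + r - j` (1-indexed) reads `λ j + (r - 1 - j)`, and
`(1+βx_i)^{j-1}` reads `(1+βx_i)^j`. -/
theorem stmt_18 {K : Type*} [Field K] (r : ℕ) (β : K) (x : Fin r → K) (b : ℕ → K)
    (lam : Fin r → ℕ) (hlam : Antitone lam)
    (hx : Function.Injective x)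
    (hxu : ∀ i, 1 + β * x i ≠ 0) (hbu : ∀ j, 1 + β * b j ≠ 0) :
    ∑ w : Equiv.Perm (Fin r),
      (∏ i : Fin r, ∏ k ∈ Finset.range (lam i + (r - 1 - (i : ℕ))),
          ((x (w i) - b k) / (1 + β * b k))) /
        ∏ i : Fin r, ∏ j ∈ Finset.Ioi i,
          ((x (w i) - x (w j)) / (1 + β * x (w j))) =
    (Matrix.det (fun i j : Fin r =>
        (∏ k ∈ Finset.range (lam j + (r - 1 - (j : ℕ))),
          ((x i - b k) / (1 + β * b k))) * (1 + β * x i) ^ (j : ℕ))) /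
      ∏ i : Fin r, ∏ j ∈ Finset.Ioi i, (x i - x j) := by
  change _ = (Matrix.det (Matrix.of fun i j : Fin r =>
      (∏ k ∈ Finset.range (lam j + (r - 1 - (j : ℕ))),
        ((x i - b k) / (1 + β * b k))) * (1 + β * x i) ^ (j : ℕ))) /
    ∏ i : Fin r, ∏ j ∈ Finset.Ioi i, (x i - x j)
  rw [Matrix.det_apply', Finset.sum_div]
  simp only [Matrix.of_apply]
  refine Finset.sum_congr rfl fun w _ => ?_
  set V : K := ∏ i : Fin r, ∏ j ∈ Finset.Ioi i, (x i - x j) with hVdef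
  have hV : V ≠ 0 := by
    refine Finset.prod_ne_zero_iff.mpr fun i _ => Finset.prod_ne_zero_iff.mpr fun j hj => ?_
    exact sub_ne_zero.mpr (fun h => (Finset.mem_Ioi.mp hj).ne' ((hx h).symm))
  set ε : K := ((Equiv.Perm.sign w : ℤ) : K) with hεdef
  have hε2 : ε * ε = 1 := by
    rcases Int.units_eq_one_or (Equiv.Perm.sign w) with h | h <;> simp [hεdef, h]
  set N : K := ∏ i : Fin r, ∏ k ∈ Finset.range (lam i + (r - 1 - (i : ℕ))),
      ((x (w i) - b k) / (1 + β * b k)) with hNdef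
  set Q : K := ∏ j : Fin r, (1 + β * x (w j)) ^ (j : ℕ) with hQdef
  have hQ : Q ≠ 0 := Finset.prod_ne_zero_iff.mpr fun j _ => pow_ne_zero _ (hxu _)
  -- denominator
  have hden : (∏ i : Fin r, ∏ j ∈ Finset.Ioi i,
      ((x (w i) - x (w j)) / (1 + β * x (w j)))) = ε * V / Q := by
    simp only [Finset.prod_div_distrib]
    rw [aux_sign r x w, aux_prod_Ioi r (fun j => 1 + β * x (w j))]
  -- the matrix-entry product
  have hnum : (∏ i : Fin r, (∏ k ∈ Finset.range (lam i + (r - 1 - (i : ℕ))),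
      ((x (w i) - b k) / (1 + β * b k))) * (1 + β * x (w i)) ^ (i : ℕ)) = N * Q := by
    rw [Finset.prod_mul_distrib]
  rw [hden, hnum]
  have hεne : ε ≠ 0 := fun h => by simp [h] at hε2
  have hεinv : ε⁻¹ = ε := inv_eq_of_mul_eq_one_left hε2
  rw [div_div_eq_mul_div, div_mul_eq_div_div_swap, div_eq_mul_inv (N * Q),
    div_eq_mul_inv (N * Q * V⁻¹) ε, hεinv, div_eq_mul_inv (ε * (N * Q))]
  ring
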